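/- Let Ω ⊂ ℝ² be a bounded region with piecewise smooth boundary ∂Ω with outward unit normal n, and let h be a C¹ positively homogeneous function of degree q > -2 with 0 ∉ ∂Ω. Then (2+q) ∫_Ω h dx = ∫_{∂Ω} (x · n) h ds. -/

import Mathlib

open MeasureTheory

/-- The planar divergence of a vector field `F : ℝ² → ℝ²`. -/
noncomputable def div2 (F : ℝ × ℝ → ℝ × ℝ) (x : ℝ × ℝ) : ℝ :=
  (fderiv ℝ F x (1, 0)).1 + (fderiv ℝ F x (0, 1)).2

/-- Dot product in the plane. -/
def dot2 (a b : ℝ × ℝ) : ℝ := a.1 * b.1 + a.2 * b.2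

/-- Rotation of a planar vector by `-π/2`. -/
def perp2 (v : ℝ × ℝ) : ℝ × ℝ := (v.2, -v.1)

/-- The homogeneous numerical integration (HNI) identity:
`(2+q) ∫_Ω h dx = ∫_{∂Ω} (x · n) h ds`, for a bounded region `Ω` whose
(piecewise smooth) boundary is parametrized counterclockwise by the `C¹` closed
curve `c : [0,1] → ℝ²` (so that `(x · n) h ds = h(c t) (c t · c'⊥ t) dt`),
with `0 ∉ ∂Ω`, `q > -2`, and `h` a `C¹` positively homogeneous function of
degree `q` integrable over `Ω`.  The applicability of the divergence theorem on
`Ω` is encoded by the hypothesis `hStokes`. -/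
theorem hni_identity
    (Ω : Set (ℝ × ℝ)) (h : ℝ × ℝ → ℝ) (q : ℝ) (c : ℝ → ℝ × ℝ)
    (hΩmeas : MeasurableSet Ω) (hΩbdd : Bornology.IsBounded Ω)
    (hq : -2 < q)
    (hc : ContDiff ℝ 1 c) (hclosed : c 0 = c 1)
    (hbdry : c '' Set.Icc 0 1 = frontier Ω)
    (h0 : (0 : ℝ × ℝ) ∉ frontier Ω)
    (hC1 : ContDiffOn ℝ 1 h {(0 : ℝ × ℝ)}ᶜ)
    (hhom : ∀ l : ℝ, 0 < l → ∀ x : ℝ × ℝ, x ≠ 0 → h (l • x) = l ^ q * h x)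
    (hint : IntegrableOn h Ω volume)
    (hStokes : ∀ F : ℝ × ℝ → ℝ × ℝ, ContDiffOn ℝ 1 F {(0 : ℝ × ℝ)}ᶜ →
      IntegrableOn (div2 F) Ω volume →
      ∫ x in Ω, div2 F x = ∫ t in (0:ℝ)..1, dot2 (F (c t)) (perp2 (deriv c t))) :
    (2 + q) * ∫ x in Ω, h x =
      ∫ t in (0:ℝ)..1, h (c t) * dot2 (c t) (perp2 (deriv c t)) := by
  set F : ℝ × ℝ → ℝ × ℝ := fun y => h y • y with hF
  -- differentiability of h away from 0
  have hdiff : ∀ x : ℝ × ℝ, x ≠ 0 → HasFDerivAt h (fderiv ℝ h x) x := by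
    intro x hx
    exact ((hC1.contDiffAt (isOpen_compl_singleton.mem_nhds hx)).differentiableAt
      one_ne_zero).hasFDerivAt
  -- Euler's identity
  have euler : ∀ x : ℝ × ℝ, x ≠ 0 → fderiv ℝ h x x = q * h x := by
    intro x hx
    have hsm : HasDerivAt (fun l : ℝ => l • x) x 1 := by
      simpa using (hasDerivAt_id (1 : ℝ)).smul_const x
    have hg : HasDerivAt (fun l : ℝ => h (l • x)) (fderiv ℝ h x x) 1 := by
      have hd' : HasFDerivAt h (fderiv ℝ h x) ((1:ℝ) • x) := by
        simpa using hdiff x hx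
      exact hd'.comp_hasDerivAt 1 hsm
    have hr : HasDerivAt (fun l : ℝ => l ^ q * h x) (q * h x) 1 := by
      have := (Real.hasDerivAt_rpow_const (x := (1:ℝ)) (p := q)
        (Or.inl one_ne_zero)).mul_const (h x)
      simpa using this
    have hev : (fun l : ℝ => h (l • x)) =ᶠ[nhds 1] fun l : ℝ => l ^ q * h x := by
      filter_upwards [isOpen_Ioi.mem_nhds (by norm_num : (1:ℝ) ∈ Set.Ioi (0:ℝ))] with l hl
      exact hhom l hl x hx
    exact hg.unique (hr.congr_of_eventuallyEq hev)
  -- divergence of F away from 0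
  have hdiv : ∀ x : ℝ × ℝ, x ≠ 0 → div2 F x = (2 + q) * h x := by
    intro x hx
    have hFd : HasFDerivAt F
        (h x • ContinuousLinearMap.id ℝ (ℝ × ℝ) + (fderiv ℝ h x).smulRight x) x :=
      (hdiff x hx).smul (hasFDerivAt_id x)
    have hfe : fderiv ℝ F x
        = h x • ContinuousLinearMap.id ℝ (ℝ × ℝ) + (fderiv ℝ h x).smulRight x :=
      hFd.fderiv
    have hx2 : x = x.1 • ((1:ℝ), (0:ℝ)) + x.2 • ((0:ℝ), (1:ℝ)) := by
      simp [Prod.ext_iff]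
    set φ := fderiv ℝ h x with hφ
    have hlin : φ (1, 0) * x.1 + φ (0, 1) * x.2 = φ x := by
      conv_rhs => rw [hx2]
      rw [map_add, φ.map_smul, φ.map_smul]
      simp [smul_eq_mul]; ring
    simp only [div2, hfe, ContinuousLinearMap.add_apply, ContinuousLinearMap.smul_apply,
      ContinuousLinearMap.id_apply, ContinuousLinearMap.smulRight_apply,
      Prod.fst_add, Prod.snd_add, Prod.smul_fst, Prod.smul_snd, smul_eq_mul]
    linarith [hlin, euler x hx]
  -- F is C¹ away from 0
  have hFc : ContDiffOn ℝ 1 F {(0 : ℝ × ℝ)}ᶜ := hC1.smul contDiffOn_id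
  -- a.e. equality of div2 F and (2+q) h
  have hzero : ∀ᵐ x : ℝ × ℝ ∂volume, x ≠ 0 := by
    rw [MeasureTheory.ae_iff]
    simp [measure_singleton (0 : ℝ × ℝ)]
  have hae : ∀ᵐ x : ℝ × ℝ ∂volume, div2 F x = (2 + q) * h x := by
    filter_upwards [hzero] with x hx using hdiv x hx
  have haeΩ : div2 F =ᵐ[volume.restrict Ω] fun x => (2 + q) * h x :=
    ae_restrict_of_ae hae
  have hintF : IntegrableOn (div2 F) Ω volume :=
    (hint.const_mul (2 + q)).congr haeΩ.symm
  have hs := hStokes F hFc hintF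
  calc (2 + q) * ∫ x in Ω, h x
      = ∫ x in Ω, (2 + q) * h x := (integral_const_mul _ _).symm
    _ = ∫ x in Ω, div2 F x := (integral_congr_ae haeΩ).symm
    _ = ∫ t in (0:ℝ)..1, dot2 (F (c t)) (perp2 (deriv c t)) := hs
    _ = ∫ t in (0:ℝ)..1, h (c t) * dot2 (c t) (perp2 (deriv c t)) := by
        apply intervalIntegral.integral_congr
        intro t _
        simp only [hF, dot2, perp2, Prod.smul_fst, Prod.smul_snd, smul_eq_mul]
        ring
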